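/- The following identity of convergent series of real numbers holds: 2·Σ_{i=2}^∞ 1/(4i²−1) + Σ_{i=1}^∞ 1/((2i−1)²(2i+3)²) + Σ_{i=0}^∞ ((i+2)² + (i+1)²)/((2i+1)(2i+5)(2i+3)²) = 5/9. Equivalently, the quantity ((T−t)^4/16)·(5/9 − 2Σ_{i=2}^q 1/(4i²−1) − Σ_{i=1}^q 1/((2i−1)²(2i+3)²) − Σ_{i=0}^q ((i+2)²+(i+1)²)/((2i+1)(2i+5)(2i+3)²)) tends to 0 as q → ∞ for any reals t < T. -/

import Mathlib

open Filter Finset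

private lemma telescope_hasSum {f g : ℕ → ℝ} (hf : ∀ i, 0 ≤ f i)
    (hfg : ∀ i, f i = g i - g (i + 1)) (hg : Tendsto g atTop (nhds 0)) :
    HasSum f (g 0) := by
  rw [hasSum_iff_tendsto_nat_of_nonneg hf]
  have h : ∀ n, ∑ i ∈ range n, f i = g 0 - g n := by
    intro n
    rw [Finset.sum_congr rfl fun i _ => hfg i, Finset.sum_range_sub' g]
  simp only [h]
  simpa using tendsto_const_nhds.sub hg

private lemma tendsto_inv_lin (c : ℝ) :
    Tendsto (fun i : ℕ => 1 / (2 * (i : ℝ) + c)) atTop (nhds 0) := by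
  simp only [one_div]
  apply Filter.Tendsto.comp tendsto_inv_atTop_zero
  apply Filter.tendsto_atTop_add_const_right
  exact (tendsto_natCast_atTop_atTop (R := ℝ)).const_mul_atTop two_pos

private lemma fA_hasSum :
    HasSum (fun i : ℕ => (1 : ℝ) / (4 * ((i : ℝ) + 2) ^ 2 - 1)) (1 / 6) := by
  have h := telescope_hasSum (f := fun i : ℕ => (1 : ℝ) / (4 * ((i : ℝ) + 2) ^ 2 - 1))
    (g := fun i : ℕ => 1 / (2 * (2 * (i : ℝ) + 3)))
    (fun i => by
      have hi : (0 : ℝ) ≤ (i : ℝ) := Nat.cast_nonneg i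
      have : (0 : ℝ) < 4 * ((i : ℝ) + 2) ^ 2 - 1 := by nlinarith
      positivity)
    (fun i => by
      have hi : (0 : ℝ) ≤ (i : ℝ) := Nat.cast_nonneg i
      have h0 : (4 * ((i : ℝ) + 2) ^ 2 - 1) ≠ 0 := by nlinarith
      have h1 : (2 * (i : ℝ) + 3) ≠ 0 := by positivity
      have h2 : (2 * ((i : ℝ) + 1) + 3) ≠ 0 := by positivity
      push_cast
      field_simp
      ring)
    (by
      have h2 := (tendsto_inv_lin 3).div_const 2
      simp only [div_div] at h2
      simpa [mul_comm] using h2)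
  norm_num at h
  convert h using 1
  norm_num

private noncomputable def gBC (i : ℕ) : ℝ :=
  (1 / 16) * (1 / (2 * (i : ℝ) + 1) ^ 2 - 1 / (2 * (i : ℝ) + 3) ^ 2)
    + (1 / 8) * (1 / (2 * (i : ℝ) + 1) + 1 / (2 * (i : ℝ) + 3))

private lemma fBC_hasSum :
    HasSum (fun i : ℕ =>
      (1 : ℝ) / ((2 * (i : ℝ) + 1) ^ 2 * (2 * (i : ℝ) + 5) ^ 2)
        + (((i : ℝ) + 2) ^ 2 + ((i : ℝ) + 1) ^ 2)
          / ((2 * (i : ℝ) + 1) * (2 * (i : ℝ) + 5) * (2 * (i : ℝ) + 3) ^ 2)) (2 / 9) := by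
  have h := telescope_hasSum
    (f := fun i : ℕ =>
      (1 : ℝ) / ((2 * (i : ℝ) + 1) ^ 2 * (2 * (i : ℝ) + 5) ^ 2)
        + (((i : ℝ) + 2) ^ 2 + ((i : ℝ) + 1) ^ 2)
          / ((2 * (i : ℝ) + 1) * (2 * (i : ℝ) + 5) * (2 * (i : ℝ) + 3) ^ 2))
    (g := gBC)
    (fun i => by positivity)
    (fun i => by
      unfold gBC
      have h1 : (2 * (i : ℝ) + 1) ≠ 0 := by positivity
      have h3 : (2 * (i : ℝ) + 3) ≠ 0 := by positivity
      have h5 : (2 * (i : ℝ) + 5) ≠ 0 := by positivity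
      have h7 : (2 * ((i : ℝ) + 1) + 1) ≠ 0 := by positivity
      have h9 : (2 * ((i : ℝ) + 1) + 3) ≠ 0 := by positivity
      push_cast
      field_simp
      ring)
    (by
      unfold gBC
      have h1 := tendsto_inv_lin 1
      have h3 := tendsto_inv_lin 3
      have hsq1 : Tendsto (fun i : ℕ => 1 / (2 * (i : ℝ) + 1) ^ 2) atTop (nhds 0) := by
        have := h1.mul h1
        simpa [div_mul_div_comm, ← sq] using this
      have hsq3 : Tendsto (fun i : ℕ => 1 / (2 * (i : ℝ) + 3) ^ 2) atTop (nhds 0) := by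
        have := h3.mul h3
        simpa [div_mul_div_comm, ← sq] using this
      have := ((hsq1.sub hsq3).const_mul (1 / 16 : ℝ)).add ((h1.add h3).const_mul (1 / 8 : ℝ))
      simpa using this)
  have hg0 : gBC 0 = 2 / 9 := by unfold gBC; norm_num
  rwa [hg0] at h

private lemma fB_summable :
    Summable fun i : ℕ => (1 : ℝ) / ((2 * (i : ℝ) + 1) ^ 2 * (2 * (i : ℝ) + 5) ^ 2) := by
  have hbig : Summable fun i : ℕ => (1 : ℝ) / ((i : ℝ) + 1) ^ 2 := by
    have := (summable_nat_add_iff 1).mpr <| Real.summable_one_div_nat_pow.mpr one_lt_two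
    simpa [one_div] using this
  apply Summable.of_nonneg_of_le (fun i => by positivity) _ hbig
  intro i
  have hi : (0 : ℝ) ≤ (i : ℝ) := Nat.cast_nonneg i
  apply div_le_div_of_nonneg_left zero_le_one (by positivity)
  nlinarith [sq_nonneg ((i : ℝ) + 1)]

/-- the series identity
`2·Σ_{i=2}^∞ 1/(4i²−1) + Σ_{i=1}^∞ 1/((2i−1)²(2i+3)²)
  + Σ_{i=0}^∞ ((i+2)²+(i+1)²)/((2i+1)(2i+5)(2i+3)²) = 5/9`,
and consequently the error quantity
`((T−t)⁴/16)(5/9 − 2Σ_{i=2}^q … − Σ_{i=1}^q … − Σ_{i=0}^q …)` tends to `0` as `q → ∞`. -/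
theorem series_identity_five_ninths :
    (Summable fun i : ℕ => (1 : ℝ) / (4 * ((i : ℝ) + 2) ^ 2 - 1)) ∧
    (Summable fun i : ℕ => (1 : ℝ) / ((2 * (i : ℝ) + 1) ^ 2 * (2 * (i : ℝ) + 5) ^ 2)) ∧
    (Summable fun i : ℕ =>
      (((i : ℝ) + 2) ^ 2 + ((i : ℝ) + 1) ^ 2)
        / ((2 * (i : ℝ) + 1) * (2 * (i : ℝ) + 5) * (2 * (i : ℝ) + 3) ^ 2)) ∧
    2 * (∑' i : ℕ, (1 : ℝ) / (4 * ((i : ℝ) + 2) ^ 2 - 1))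
      + (∑' i : ℕ, (1 : ℝ) / ((2 * (i : ℝ) + 1) ^ 2 * (2 * (i : ℝ) + 5) ^ 2))
      + (∑' i : ℕ, (((i : ℝ) + 2) ^ 2 + ((i : ℝ) + 1) ^ 2)
          / ((2 * (i : ℝ) + 1) * (2 * (i : ℝ) + 5) * (2 * (i : ℝ) + 3) ^ 2))
      = 5 / 9 ∧
    ∀ t T : ℝ, t < T →
      Filter.Tendsto
        (fun q : ℕ =>
          (T - t) ^ 4 / 16 *
            (5 / 9 - 2 * ∑ i ∈ Finset.Icc 2 q, (1 : ℝ) / (4 * (i : ℝ) ^ 2 - 1)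
              - ∑ i ∈ Finset.Icc 1 q, (1 : ℝ) / ((2 * (i : ℝ) - 1) ^ 2 * (2 * (i : ℝ) + 3) ^ 2)
              - ∑ i ∈ Finset.range (q + 1),
                  (((i : ℝ) + 2) ^ 2 + ((i : ℝ) + 1) ^ 2)
                    / ((2 * (i : ℝ) + 1) * (2 * (i : ℝ) + 5) * (2 * (i : ℝ) + 3) ^ 2)))
        Filter.atTop (nhds 0) := by
  have hA := fA_hasSum
  have hB := fB_summable
  have hBC := fBC_hasSum
  have hC : Summable fun i : ℕ =>
      (((i : ℝ) + 2) ^ 2 + ((i : ℝ) + 1) ^ 2)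
        / ((2 * (i : ℝ) + 1) * (2 * (i : ℝ) + 5) * (2 * (i : ℝ) + 3) ^ 2) := by
    have := hBC.summable.sub hB
    simpa using this
  have hCsum : HasSum (fun i : ℕ =>
      (((i : ℝ) + 2) ^ 2 + ((i : ℝ) + 1) ^ 2)
        / ((2 * (i : ℝ) + 1) * (2 * (i : ℝ) + 5) * (2 * (i : ℝ) + 3) ^ 2))
      (2 / 9 - ∑' i : ℕ, (1 : ℝ) / ((2 * (i : ℝ) + 1) ^ 2 * (2 * (i : ℝ) + 5) ^ 2)) := by
    have := hBC.sub hB.hasSum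
    simpa using this
  refine ⟨hA.summable, hB, hC, ?_, ?_⟩
  · rw [hA.tsum_eq, hCsum.tsum_eq]
    ring
  · intro t T ht
    set SB := ∑' i : ℕ, (1 : ℝ) / ((2 * (i : ℝ) + 1) ^ 2 * (2 * (i : ℝ) + 5) ^ 2) with hSB
    -- partial sums of the three series
    have T1 : Tendsto (fun q : ℕ => ∑ i ∈ Finset.Icc 2 q, (1 : ℝ) / (4 * (i : ℝ) ^ 2 - 1))
        atTop (nhds (1 / 6)) := by
      have key : ∀ q : ℕ, ∑ i ∈ Finset.Icc 2 q, (1 : ℝ) / (4 * (i : ℝ) ^ 2 - 1)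
          = ∑ j ∈ range (q - 1), (1 : ℝ) / (4 * ((j : ℝ) + 2) ^ 2 - 1) := by
        intro q
        rw [← Finset.Ico_add_one_right_eq_Icc, Finset.sum_Ico_eq_sum_range]
        have : q + 1 - 2 = q - 1 := by omega
        rw [this]
        refine Finset.sum_congr rfl fun j _ => ?_
        push_cast
        ring_nf
      simp only [key]
      exact hA.tendsto_sum_nat.comp (tendsto_sub_atTop_nat 1)
    have T2 : Tendsto (fun q : ℕ =>
        ∑ i ∈ Finset.Icc 1 q, (1 : ℝ) / ((2 * (i : ℝ) - 1) ^ 2 * (2 * (i : ℝ) + 3) ^ 2))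
        atTop (nhds SB) := by
      have key : ∀ q : ℕ, ∑ i ∈ Finset.Icc 1 q,
            (1 : ℝ) / ((2 * (i : ℝ) - 1) ^ 2 * (2 * (i : ℝ) + 3) ^ 2)
          = ∑ j ∈ range q, (1 : ℝ) / ((2 * (j : ℝ) + 1) ^ 2 * (2 * (j : ℝ) + 5) ^ 2) := by
        intro q
        rw [← Finset.Ico_add_one_right_eq_Icc, Finset.sum_Ico_eq_sum_range]
        have : q + 1 - 1 = q := by omega
        rw [this]
        refine Finset.sum_congr rfl fun j _ => ?_
        push_cast
        ring_nf
      simp only [key]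
      exact hB.hasSum.tendsto_sum_nat
    have T3 : Tendsto (fun q : ℕ =>
        ∑ i ∈ Finset.range (q + 1),
          (((i : ℝ) + 2) ^ 2 + ((i : ℝ) + 1) ^ 2)
            / ((2 * (i : ℝ) + 1) * (2 * (i : ℝ) + 5) * (2 * (i : ℝ) + 3) ^ 2))
        atTop (nhds (2 / 9 - SB)) :=
      hCsum.tendsto_sum_nat.comp (tendsto_add_atTop_nat 1)
    have final := (((tendsto_const_nhds (x := (5 : ℝ) / 9)).sub (T1.const_mul 2)).sub T2).sub T3
    have := final.const_mul ((T - t) ^ 4 / 16)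
    have hval : (T - t) ^ 4 / 16 * (5 / 9 - 2 * (1 / 6) - SB - (2 / 9 - SB)) = 0 := by ring
    rwa [hval] at this
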